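/- For the semi-discrete scheme Δx_i dU_i/dt = -(F_{i+1/2} - F_{i-1/2}) with F_{i+1/2} = A_{i+1/2}^+ U_{i+1/2,-} - A_{i+1/2}^- U_{i+1/2,+} and zero-flux boundary conditions, the discrete relative entropy E_Δ(t) = Σ_i Δx_i [H(U_i) - H(U_i^{eq}) - h(U_i^{eq})(U_i - U_i^{eq})] satisfies dE_Δ/dt ≤ -Σ_i Δx_{i+1/2} |A_{i+1/2}|² min(U_{i+1/2,-}, U_{i+1/2,+}), where A_{i+1/2} = -[V_{i+1} - V_i + h(U_{i+1}) - h(U_i)]/Δx_{i+1/2} and (U_i^{eq}) satisfies the discrete equilibrium relation h(U_{i+1}^{eq}) - h(U_i^{eq}) = -(V_{i+1} - V_i). -/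

import Mathlib

open Finset

lemma abel_sum (g F : ℕ → ℝ) (N : ℕ) :
    ∑ i ∈ range (N + 1), g i * (F (i + 1) - F i)
      = g N * F (N + 1) - g 0 * F 0 - ∑ i ∈ range N, (g (i + 1) - g i) * F (i + 1) := by
  induction N with
  | zero => simp; ring
  | succ n ih => rw [sum_range_succ, ih, sum_range_succ]; ring

/-- Semi-discrete entropy dissipation estimate: along the semi-discrete scheme with
zero-flux boundary conditions, the discrete relative entropy is dissipated at a rate
controlled by `Σ Δx_{i+1/2} |A_{i+1/2}|² min(U_{i+1/2,-}, U_{i+1/2,+})`. -/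
theorem semidiscrete_entropy_dissipation
    (N : ℕ) (t : ℝ)
    (Δx Δxh : ℕ → ℝ)          -- cell sizes Δx_i and interface distances Δx_{i+1/2}
    (V Ueq : ℕ → ℝ)           -- potential values and discrete equilibrium
    (H h : ℝ → ℝ)
    (U U' : ℕ → ℝ → ℝ)        -- cell values and their time derivatives
    (Um Up : ℕ → ℝ → ℝ)       -- slope-limited reconstructions U_{i+1/2,-}, U_{i+1/2,+}
    (F : ℕ → ℝ → ℝ)           -- fluxes, F j = F_{j-1/2} at the interfaces j = 0,…,N+1
    (hΔx : ∀ i, 0 < Δx i) (hΔxh : ∀ i, 0 < Δxh i)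
    (hH : ∀ s > (0:ℝ), HasDerivAt H (h s) s)
    (hmono : StrictMonoOn h (Set.Ioi 0))
    (hUpos : ∀ i ≤ N, 0 < U i t)
    (hUeqpos : ∀ i ≤ N, 0 < Ueq i)
    (hUm : ∀ i < N, 0 ≤ Um i t) (hUp : ∀ i < N, 0 ≤ Up i t)
    -- zero-flux boundary conditions
    (hF0 : ∀ s, F 0 s = 0) (hFN : ∀ s, F (N + 1) s = 0)
    -- interior upwind fluxes with velocity A_{i+1/2}
    (hFint : ∀ i < N, ∀ s : ℝ,
        F (i + 1) s =
          (max (-(V (i + 1) - V i + h (U (i + 1) s) - h (U i s)) / Δxh i) 0) * Um i s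
          - (max (-(-(V (i + 1) - V i + h (U (i + 1) s) - h (U i s)) / Δxh i)) 0) * Up i s)
    -- semi-discrete scheme
    (hscheme : ∀ i ≤ N, HasDerivAt (U i) (U' i t) t ∧
        Δx i * U' i t = -(F (i + 1) t - F i t))
    -- discrete equilibrium relation
    (heq : ∀ i < N, h (Ueq (i + 1)) - h (Ueq i) = -(V (i + 1) - V i))
    -- the discrete relative entropy is differentiable at t with derivative E'
    (E' : ℝ)
    (hE : HasDerivAt (fun s => ∑ i ∈ Finset.range (N + 1),
        Δx i * (H (U i s) - H (Ueq i) - h (Ueq i) * (U i s - Ueq i))) E' t) :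
    E' ≤ -∑ i ∈ Finset.range N,
        Δxh i * (-(V (i + 1) - V i + h (U (i + 1) t) - h (U i t)) / Δxh i) ^ 2
          * min (Um i t) (Up i t) := by
  -- Step 1: compute E' via uniqueness of derivatives
  have hterm : ∀ i ∈ Finset.range (N + 1),
      HasDerivAt (fun s => Δx i * (H (U i s) - H (Ueq i) - h (Ueq i) * (U i s - Ueq i)))
        (Δx i * ((h (U i t) - h (Ueq i)) * U' i t)) t := by
    intro i hi
    have hi' : i ≤ N := Nat.lt_succ_iff.mp (Finset.mem_range.mp hi)
    have hU := (hscheme i hi').1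
    have h1 : HasDerivAt (fun s => H (U i s)) (h (U i t) * U' i t) t :=
      (hH (U i t) (hUpos i hi')).comp t hU
    have h2 := ((h1.sub_const (H (Ueq i))).sub
      ((hU.sub_const (Ueq i)).const_mul (h (Ueq i)))).const_mul (Δx i)
    exact h2.congr_deriv (by ring)
  have hD : E' = ∑ i ∈ Finset.range (N + 1), Δx i * ((h (U i t) - h (Ueq i)) * U' i t) :=
    hE.unique (HasDerivAt.fun_sum hterm)
  -- Step 2: use the scheme and summation by parts
  set g : ℕ → ℝ := fun i => h (U i t) - h (Ueq i) with hg
  have hD2 : E' = -∑ i ∈ Finset.range (N + 1), g i * (F (i + 1) t - F i t) := by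
    rw [hD, ← Finset.sum_neg_distrib]
    refine Finset.sum_congr rfl fun i hi => ?_
    have hi' : i ≤ N := Nat.lt_succ_iff.mp (Finset.mem_range.mp hi)
    have h3 := (hscheme i hi').2
    calc Δx i * (g i * U' i t) = g i * (Δx i * U' i t) := by ring
    _ = g i * (-(F (i + 1) t - F i t)) := by rw [h3]
    _ = -(g i * (F (i + 1) t - F i t)) := by ring
  have hD3 : E' = ∑ i ∈ Finset.range N, (g (i + 1) - g i) * F (i + 1) t := by
    rw [hD2, abel_sum g (fun j => F j t) N, hF0, hFN]
    ring
  rw [hD3, ← Finset.sum_neg_distrib]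
  refine Finset.sum_le_sum fun i hi => ?_
  have hiN : i < N := Finset.mem_range.mp hi
  set A : ℝ := -(V (i + 1) - V i + h (U (i + 1) t) - h (U i t)) / Δxh i with hA

  have hxh := hΔxh i
  have hAmul : A * Δxh i = -(V (i + 1) - V i + h (U (i + 1) t) - h (U i t)) :=
    div_mul_cancel₀ _ (ne_of_gt hxh)
  have hgdiff : g (i + 1) - g i = -(A * Δxh i) := by
    simp only [hg]
    linarith [heq i hiN, hAmul]
  rw [hgdiff, hFint i hiN t]
  have hmin1 := min_le_left (Um i t) (Up i t)
  have hmin2 := min_le_right (Um i t) (Up i t)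

  rcases le_or_gt 0 A with hA0 | hA0
  · rw [max_eq_left hA0, max_eq_right (by linarith : -A ≤ 0)]
    nlinarith [sq_nonneg A, hUm i hiN, mul_le_mul_of_nonneg_left hmin1 (sq_nonneg A)]
  · rw [max_eq_right (le_of_lt hA0), max_eq_left (by linarith : 0 ≤ -A)]
    nlinarith [sq_nonneg A, hUp i hiN, mul_le_mul_of_nonneg_left hmin2 (sq_nonneg A)]
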